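/- Let abc be an equilateral triangle of side 1, and let d and d' be points such that abcd and abcd' are convex deltoids (kites) symmetric about the line through b and the midpoint of ac, with ∠adc = 150° and ∠ad'c = 120°, and abcd ⊆ abcd'. Then per(abcd) − diam(abcd) > per(abcd') − diam(abcd'); in particular the functional K ↦ per K − diam K is not monotone under inclusion of convex sets. -/
import Mathlib

open EuclideanGeometry Real

lemma aux_mid {a c b d p : EuclideanSpace ℝ (Fin 2)}
    (hac : dist a c = 1) (hb : dist b a = dist b c) (hd : dist d a = dist d c)
    (hp : p ∈ segment ℝ a c ∩ segment ℝ b d) : p = midpoint ℝ a c := by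
  have hsub : segment ℝ b d ⊆ (AffineSubspace.perpBisector a c : Set (EuclideanSpace ℝ (Fin 2))) :=
    (AffineSubspace.perpBisector a c).convex.segment_subset
      (AffineSubspace.mem_perpBisector_iff_dist_eq.mpr hb)
      (AffineSubspace.mem_perpBisector_iff_dist_eq.mpr hd)
  have hpe : dist p a = dist p c := AffineSubspace.mem_perpBisector_iff_dist_eq.mp (hsub hp.2)
  have hsum : dist a p + dist p c = dist a c := dist_add_dist_of_mem_segment hp.1
  have hap : dist a p = 1 / 2 := by
    rw [dist_comm a p]; rw [hac, dist_comm a p] at hsum; linarith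
  rw [segment_eq_image_lineMap] at hp
  obtain ⟨t, ht, rfl⟩ := hp.1
  rw [dist_comm, dist_lineMap_left, hac, mul_one, Real.norm_eq_abs,
    abs_of_nonneg ht.1] at hap
  rw [hap, lineMap_one_half]

lemma aux_distmid {a c x : EuclideanSpace ℝ (Fin 2)}
    (hac : dist a c = 1) (hx : dist x a = dist x c) :
    dist x (midpoint ℝ a c) = Real.sqrt (dist x a ^ 2 - 1 / 4) := by
  have h := EuclideanGeometry.dist_sq_add_dist_sq_eq_two_mul_dist_midpoint_sq_add_half_dist_sq x a c
  rw [hac, hx] at h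
  have : dist x (midpoint ℝ a c) ^ 2 = dist x a ^ 2 - 1 / 4 := by
    rw [hx]; nlinarith
  rw [← this, Real.sqrt_sq dist_nonneg]

lemma aux_bd {a b c d : EuclideanSpace ℝ (Fin 2)}
    (hab : dist a b = 1) (hbc : dist b c = 1) (hca : dist c a = 1)
    (hkite : dist a d = dist c d)
    (hcross : (segment ℝ a c ∩ segment ℝ b d).Nonempty) :
    dist b d = Real.sqrt (3 / 4) + Real.sqrt (dist a d ^ 2 - 1 / 4) := by
  have hac : dist a c = 1 := by rw [dist_comm]; exact hca
  have hba : dist b a = dist b c := by rw [dist_comm b a, hab, hbc]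
  have hda : dist d a = dist d c := by rw [dist_comm d a, dist_comm d c, hkite]
  obtain ⟨p, hp⟩ := hcross
  have hpm := aux_mid hac hba hda hp
  subst hpm
  have h1 : dist b (midpoint ℝ a c) + dist (midpoint ℝ a c) d = dist b d :=
    dist_add_dist_of_mem_segment hp.2
  have h2 : dist b (midpoint ℝ a c) = Real.sqrt (3 / 4) := by
    rw [aux_distmid hac hba, dist_comm b a, hab]; norm_num
  have h3 : dist d (midpoint ℝ a c) = Real.sqrt (dist a d ^ 2 - 1 / 4) := by
    rw [aux_distmid hac hda, dist_comm d a]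
  rw [← h1, h2, dist_comm (midpoint ℝ a c) d, h3]

set_option maxHeartbeats 1000000 in
theorem stmt16 (a b c d d' : EuclideanSpace ℝ (Fin 2))
    (hab : dist a b = 1) (hbc : dist b c = 1) (hca : dist c a = 1)
    (hkite : dist a d = dist c d) (hkite' : dist a d' = dist c d')
    (hd : ∠ a d c = 5 * π / 6) (hd' : ∠ a d' c = 2 * π / 3)
    (hcross : (segment ℝ a c ∩ segment ℝ b d).Nonempty)
    (hcross' : (segment ℝ a c ∩ segment ℝ b d').Nonempty)
    (hsub : convexHull ℝ {a, b, c, d} ⊆ convexHull ℝ {a, b, c, d'}) :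
    (dist a b + dist b c + dist c d + dist d a) - dist b d >
      (dist a b + dist b c + dist c d' + dist d' a) - dist b d' := by
  have hac : dist a c = 1 := by rw [dist_comm]; exact hca
  have hs3 : Real.sqrt 3 ^ 2 = 3 := Real.sq_sqrt (by norm_num)
  have hs3nn : (0:ℝ) ≤ Real.sqrt 3 := Real.sqrt_nonneg 3
  have hs3lt : Real.sqrt 3 < 7 / 4 := by nlinarith [sq_nonneg (Real.sqrt 3 - 7/4)]
  -- law of cosines for d
  have hlc := EuclideanGeometry.law_cos a d c
  rw [hd, hac, ← hkite] at hlc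
  rw [show (5 * π / 6 : ℝ) = π - π / 6 by ring, Real.cos_pi_sub, Real.cos_pi_div_six] at hlc
  have hr2 : dist a d ^ 2 = 2 - Real.sqrt 3 := by nlinarith
  -- law of cosines for d'
  have hlc' := EuclideanGeometry.law_cos a d' c
  rw [hd', hac, ← hkite'] at hlc'
  rw [show (2 * π / 3 : ℝ) = π - π / 3 by ring, Real.cos_pi_sub, Real.cos_pi_div_three] at hlc'
  have hr2' : dist a d' ^ 2 = 1 / 3 := by nlinarith
  -- diagonals
  have hbd := aux_bd hab hbc hca hkite hcross
  have hbd' := aux_bd hab hbc hca hkite' hcross'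
  rw [hr2] at hbd
  rw [hr2'] at hbd'
  -- simplify square roots
  have e1 : Real.sqrt (3 / 4) = Real.sqrt 3 / 2 := by
    rw [show (3/4 : ℝ) = 3 * (1/2)^2 by norm_num, Real.sqrt_mul (by norm_num),
      Real.sqrt_sq (by norm_num)]; ring
  have e2 : Real.sqrt (1/3 - 1/4) = Real.sqrt 3 / 6 := by
    rw [show (1/3 - 1/4 : ℝ) = 3 * (1/6)^2 by norm_num, Real.sqrt_mul (by norm_num),
      Real.sqrt_sq (by norm_num)]; ring
  have e3 : Real.sqrt (2 - Real.sqrt 3 - 1/4) = 1 - Real.sqrt 3 / 2 := by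
    rw [show (2 - Real.sqrt 3 - 1/4 : ℝ) = (1 - Real.sqrt 3 / 2)^2 by nlinarith,
      Real.sqrt_sq (by nlinarith)]
  have hrd' : dist a d' = Real.sqrt 3 / 3 := by
    have : dist a d' = Real.sqrt (dist a d' ^ 2) := (Real.sqrt_sq dist_nonneg).symm
    rw [this, hr2', show (1/3 : ℝ) = 3 * (1/3)^2 by norm_num, Real.sqrt_mul (by norm_num),
      Real.sqrt_sq (by norm_num)]; ring
  rw [e1, e3] at hbd
  rw [e1, e2] at hbd'
  have hbdval : dist b d = 1 := by rw [hbd]; ring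
  have hrdgt : dist a d > 1 / 2 := by nlinarith [dist_nonneg (x := a) (y := d)]
  have hcd' : dist c d' = Real.sqrt 3 / 3 := by rw [← hkite', hrd']
  have hd'a : dist d' a = Real.sqrt 3 / 3 := by rw [dist_comm, hrd']
  have hcd : dist c d = dist a d := hkite.symm
  have hda : dist d a = dist a d := dist_comm d a
  rw [hab, hbc, hbdval, hbd', hcd', hd'a, hcd, hda]
  linarith
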